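/- Main theorem (one key step): Suppose ≿₀, ≿₁, …, ≿ₙ are variational Bewley preferences (uᵢ, cᵢ) with each uᵢ unbounded affine on X = ℝ^d, Preference Diversity holds, and Standard Pareto holds (f ≿ᵢ g for all i ∈ N implies f ≿₀ g). Then there exist α ∈ ℝⁿ₊ and β ∈ ℝ with u₀ = Σᵢ αᵢuᵢ + β and c₀(p) ≥ max_{i∈N} αᵢcᵢ(p) for all p ∈ Δ(S). -/

import Mathlib

open Finset ENNReal

/-- `p` is a probability distribution on the finite state space `S`. -/
def IsProb {S : Type*} [Fintype S] (p : S → ℝ) : Prop :=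
  (∀ s, 0 ≤ p s) ∧ ∑ s, p s = 1

/-- `u` is an affine function. -/
def IsAffineFn {X : Type*} [AddCommGroup X] [Module ℝ X] (u : X → ℝ) : Prop :=
  ∀ x y : X, ∀ t : ℝ, u (t • x + (1 - t) • y) = t * u x + (1 - t) * u y

/-- `u` is unbounded. -/
def UnboundedFn {X : Type*} (u : X → ℝ) : Prop :=
  ∀ M : ℝ, ∃ x, M < |u x|

/-- The variational Bewley preference induced by `(u, c)`:
`f ≿ g` iff `∑ p(s)u(f(s)) + c(p) ≥ ∑ p(s)u(g(s))` for all `p ∈ Δ(S)`. -/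
def VBPref {S : Type*} [Fintype S] {X : Type*} (u : X → ℝ)
    (c : (S → ℝ) → ℝ≥0∞) (f g : S → X) : Prop :=
  ∀ p : S → ℝ, IsProb p →
    ((∑ s, p s * u (g s) : ℝ) : EReal) ≤ ((∑ s, p s * u (f s) : ℝ) : EReal) + (c p : EReal)

/-- The Bewley preference induced by `(u, P)`. -/
def BewPref {S : Type*} [Fintype S] {X : Type*} (u : X → ℝ)
    (P : Set (S → ℝ)) (f g : S → X) : Prop :=
  ∀ p ∈ P, (∑ s, p s * u (g s)) ≤ ∑ s, p s * u (f s)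

/-- `min_{p ∈ Δ(S)} c(p) = 0` (the minimum value 0 is attained). -/
def MinZero {S : Type*} [Fintype S] (c : (S → ℝ) → ℝ≥0∞) : Prop :=
  ∃ p : S → ℝ, IsProb p ∧ c p = 0

/-- Convexity of the perception function `c` on the simplex. -/
def ConvexPerc {S : Type*} [Fintype S] (c : (S → ℝ) → ℝ≥0∞) : Prop :=
  ∀ p q : S → ℝ, IsProb p → IsProb q → ∀ t : ℝ, 0 ≤ t → t ≤ 1 →
    c (fun s => t * p s + (1 - t) * q s) ≤
      ENNReal.ofReal t * c p + ENNReal.ofReal (1 - t) * c q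

/- ---------------- auxiliary lemmas ---------------- -/

lemma real_le_ennreal {a : ℝ} {b : ℝ≥0∞} (h : b ≠ ⊤ → a ≤ b.toReal) :
    (a : EReal) ≤ (b : EReal) := by
  induction b using ENNReal.recTopCoe with
  | top => simp
  | coe x =>
    rw [EReal.coe_nnreal_eq_coe_real]
    exact EReal.coe_le_coe_iff.2 (by simpa using h (by simp))

lemma ereal_cancel {A B : ℝ} {C : ℝ≥0∞} (h : ((A + B : ℝ) : EReal) ≤ (A : EReal) + C) :
    ((B : ℝ) : EReal) ≤ C := by
  induction C using ENNReal.recTopCoe with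
  | top => simp
  | coe x =>
    rw [EReal.coe_nnreal_eq_coe_real] at h ⊢
    rw [← EReal.coe_add] at h
    exact EReal.coe_le_coe_iff.2 (by linarith [EReal.coe_le_coe_iff.1 h])

lemma ereal_uncancel {A B : ℝ} {C : ℝ≥0∞} (h : ((B : ℝ) : EReal) ≤ C) :
    ((A + B : ℝ) : EReal) ≤ (A : EReal) + C := by
  induction C using ENNReal.recTopCoe with
  | top => simp
  | coe x =>
    rw [EReal.coe_nnreal_eq_coe_real] at h ⊢
    rw [← EReal.coe_add]
    exact EReal.coe_le_coe_iff.2 (by linarith [EReal.coe_le_coe_iff.1 h])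

lemma ereal_self_le_add {A : ℝ} (C : ℝ≥0∞) : (A : EReal) ≤ (A : EReal) + C := by
  have h0 : (((0 : ℝ)) : EReal) ≤ C := by
    simpa using EReal.coe_ennreal_nonneg C
  simpa using ereal_uncancel (A := A) (B := 0) (C := C) h0

lemma affine_exists_linear {X : Type*} [AddCommGroup X] [Module ℝ X] {w : X → ℝ}
    (hw : IsAffineFn w) : ∃ L : X →ₗ[ℝ] ℝ, ∀ x, w x = L x + w 0 := by
  have hsmul : ∀ (t : ℝ) (x : X), w (t • x) - w 0 = t * (w x - w 0) := by
    intro t x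
    have := hw x 0 t
    rw [smul_zero, add_zero] at this
    rw [this]; ring
  have hadd : ∀ x y : X, w (x + y) - w 0 = (w x - w 0) + (w y - w 0) := by
    intro x y
    have h1 : w ((2:ℝ) • ((1/2:ℝ) • x + (1/2:ℝ) • y)) - w 0
        = 2 * (w ((1/2:ℝ) • x + (1/2:ℝ) • y) - w 0) := hsmul 2 _
    have h2 : w ((1/2:ℝ) • x + (1/2:ℝ) • y) = (1/2) * w x + (1/2) * w y := by
      have := hw x y (1/2); norm_num at this ⊢; linarith [this]
    have h3 : (2:ℝ) • ((1/2:ℝ) • x + (1/2:ℝ) • y) = x + y := by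
      rw [smul_add, smul_smul, smul_smul]; norm_num
    rw [h3] at h1
    rw [h1, h2]; ring
  refine ⟨LinearMap.mk ⟨fun x => w x - w 0, hadd⟩ ?_, fun x => by show w x = w x - w 0 + w 0; ring⟩
  intro t x; simpa using hsmul t x

lemma exists_subgradient {S : Type*} [Fintype S] (c : (S → ℝ) → ℝ≥0∞)
    (hconv : ConvexPerc c) (hlsc : LowerSemicontinuous c) (hmin : MinZero c)
    (p : S → ℝ) (hp : IsProb p) (t0 : ℝ) (ht0 : 0 ≤ t0) (hlt : ENNReal.ofReal t0 < c p) :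
    ∃ φ : S → ℝ, (∀ q, IsProb q → ((∑ s, q s * φ s : ℝ) : EReal) ≤ (c q : EReal)) ∧
      t0 ≤ ∑ s, p s * φ s := by
  classical
  set epi : Set ((S → ℝ) × ℝ) :=
    {x | IsProb x.1 ∧ 0 ≤ x.2 ∧ c x.1 ≤ ENNReal.ofReal x.2} with hepidef
  -- convexity of the epigraph
  have hconvepi : Convex ℝ epi := by
    rintro a ⟨ha1, ha2, ha3⟩ b ⟨hb1, hb2, hb3⟩ ta tb hta htb htab
    have htb' : tb = 1 - ta := by linarith
    refine ⟨⟨?_, ?_⟩, ?_, ?_⟩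
    · intro s
      have := ha1.1 s; have := hb1.1 s
      have : (0:ℝ) ≤ ta * a.1 s + tb * b.1 s := by positivity
      simpa [Prod.smul_fst, Pi.add_apply, Pi.smul_apply, smul_eq_mul] using this
    · have : ∑ s, (ta * a.1 s + tb * b.1 s) = 1 := by
        rw [Finset.sum_add_distrib, ← Finset.mul_sum, ← Finset.mul_sum, ha1.2, hb1.2]
        linarith
      simpa [Prod.smul_fst, Pi.add_apply, Pi.smul_apply, smul_eq_mul] using this
    · have : (0:ℝ) ≤ ta * a.2 + tb * b.2 := by positivity
      simpa [smul_eq_mul] using this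
    · have hkey := hconv a.1 b.1 ha1 hb1 ta hta (by linarith)
      have hfun : ((ta • a + tb • b : (S → ℝ) × ℝ)).1
          = fun s => ta * a.1 s + (1 - ta) * b.1 s := by
        funext s
        simp [Prod.smul_fst, Pi.add_apply, Pi.smul_apply, smul_eq_mul, htb']
      have hsnd : ((ta • a + tb • b : (S → ℝ) × ℝ)).2 = ta * a.2 + tb * b.2 := by
        simp [smul_eq_mul]
      rw [hfun, hsnd]
      refine hkey.trans ?_
      have h1 : ENNReal.ofReal ta * c a.1 ≤ ENNReal.ofReal ta * ENNReal.ofReal a.2 :=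
        mul_le_mul_right ha3 _
      have h2 : ENNReal.ofReal (1 - ta) * c b.1
          ≤ ENNReal.ofReal (1 - ta) * ENNReal.ofReal b.2 :=
        mul_le_mul_right hb3 _
      refine (add_le_add h1 h2).trans_eq ?_
      rw [← ENNReal.ofReal_mul hta, ← ENNReal.ofReal_mul (by linarith : (0:ℝ) ≤ 1 - ta),
        ← ENNReal.ofReal_add (by positivity) (by have := hb2; nlinarith)]
      rw [htb']
  -- closedness of the epigraph
  have hopen : IsOpen {x : (S → ℝ) × ℝ | ENNReal.ofReal x.2 < c x.1} := by
    rw [isOpen_iff_mem_nhds]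
    rintro ⟨q, t⟩ hx
    obtain ⟨y, hy1, hy2⟩ := exists_between (show ENNReal.ofReal t < c q from hx)
    have h1 : {q' : S → ℝ | y < c q'} ∈ nhds q := hlsc q y hy2
    have h2 : {t' : ℝ | ENNReal.ofReal t' < y} ∈ nhds t :=
      (isOpen_Iio.preimage ENNReal.continuous_ofReal).mem_nhds hy1
    rw [nhds_prod_eq]
    refine Filter.mem_of_superset (Filter.prod_mem_prod h1 h2) ?_
    rintro ⟨q', t'⟩ ⟨hq', ht'⟩
    show ENNReal.ofReal t' < c q'
    exact lt_trans ht' hq'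
  have hclosed : IsClosed epi := by
    have hc1 : IsClosed {x : (S → ℝ) × ℝ | ∀ s, 0 ≤ x.1 s} := by
      have he : {x : (S → ℝ) × ℝ | ∀ s, 0 ≤ x.1 s} = ⋂ s, {x : (S → ℝ) × ℝ | 0 ≤ x.1 s} := by
        ext x; simp
      rw [he]
      exact isClosed_iInter fun s => isClosed_le continuous_const
        ((continuous_apply s).comp continuous_fst)
    have hc2 : IsClosed {x : (S → ℝ) × ℝ | ∑ s, x.1 s = 1} :=
      isClosed_eq (continuous_finset_sum _ fun s _ => (continuous_apply s).comp continuous_fst)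
        continuous_const
    have hc3 : IsClosed {x : (S → ℝ) × ℝ | 0 ≤ x.2} := isClosed_le continuous_const continuous_snd
    have hc4 : IsClosed {x : (S → ℝ) × ℝ | c x.1 ≤ ENNReal.ofReal x.2} := by
      have he : {x : (S → ℝ) × ℝ | c x.1 ≤ ENNReal.ofReal x.2}
          = {x : (S → ℝ) × ℝ | ENNReal.ofReal x.2 < c x.1}ᶜ := by
        ext x; simp [not_lt]
      rw [he]
      exact hopen.isClosed_compl
    have he : epi = ({x : (S → ℝ) × ℝ | ∀ s, 0 ≤ x.1 s} ∩ {x : (S → ℝ) × ℝ | ∑ s, x.1 s = 1})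
        ∩ ({x : (S → ℝ) × ℝ | 0 ≤ x.2} ∩ {x : (S → ℝ) × ℝ | c x.1 ≤ ENNReal.ofReal x.2}) := by
      ext x
      simp only [hepidef, Set.mem_setOf_eq, Set.mem_inter_iff, IsProb]
    rw [he]
    exact ((hc1.inter hc2).inter (hc3.inter hc4))
  -- separation
  have hnotmem : ((p, t0) : (S → ℝ) × ℝ) ∉ epi := by
    rintro ⟨-, -, h3⟩
    exact absurd h3 (not_le.2 hlt)
  obtain ⟨F, M, hFlt, hFx⟩ := geometric_hahn_banach_closed_point hconvepi hclosed hnotmem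
  set r : ℝ := F ((0 : S → ℝ), (1 : ℝ)) with hrdef
  have hdecomp : ∀ (q : S → ℝ) (t : ℝ), F (q, t) = F (q, 0) + t * r := by
    intro q t
    have he : ((q, t) : (S → ℝ) × ℝ) = (q, 0) + t • ((0 : S → ℝ), (1 : ℝ)) := by
      simp [Prod.ext_iff]
    rw [he, map_add, map_smul, smul_eq_mul]
  set ψ : S → ℝ := fun s => F (Pi.single s 1, 0) with hψdef
  have hlinq : ∀ q : S → ℝ, F (q, 0) = ∑ s, q s * ψ s := by
    intro q
    have hsingle : ∀ s, q s • (Pi.single s 1 : S → ℝ) = Pi.single s (q s) := by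
      intro s
      rw [← Pi.single_smul, smul_eq_mul, mul_one]
    have hq : ((q, (0 : ℝ)) : (S → ℝ) × ℝ)
        = ∑ s, q s • ((Pi.single s 1 : S → ℝ), (0 : ℝ)) := by
      refine Prod.ext ?_ ?_
      · rw [Prod.fst_sum]
        simp only [Prod.smul_fst, hsingle]
        exact (Finset.univ_sum_single q).symm
      · rw [Prod.snd_sum]
        simp
    rw [hq, map_sum]
    apply Finset.sum_congr rfl
    intro s _
    rw [map_smul, smul_eq_mul]
  have hsum2 : ∀ (k m : ℝ) (q : S → ℝ), IsProb q →
      ∑ s, q s * (k * ψ s + m) = k * F (q, 0) + m := by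
    intro k m q hq
    calc ∑ s, q s * (k * ψ s + m) = ∑ s, (k * (q s * ψ s) + m * q s) := by
          apply Finset.sum_congr rfl; intro s _; ring
      _ = k * ∑ s, q s * ψ s + m * ∑ s, q s := by
          rw [Finset.sum_add_distrib, Finset.mul_sum, Finset.mul_sum]
      _ = k * F (q, 0) + m := by rw [hq.2, hlinq q, mul_one]
  -- r ≤ 0
  obtain ⟨pmin, hpmin, hcpmin⟩ := hmin
  have hmem : ∀ t : ℝ, 0 ≤ t → ((pmin, t) : (S → ℝ) × ℝ) ∈ epi := by
    intro t ht
    exact ⟨hpmin, ht, by rw [hcpmin]; exact zero_le⟩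
  have hrle : r ≤ 0 := by
    by_contra hpos
    push_neg at hpos
    set T : ℝ := max 0 ((M - F (pmin, 0)) / r + 1) with hT
    have hT0 : 0 ≤ T := le_max_left _ _
    have hT1 : (M - F (pmin, 0)) / r + 1 ≤ T := le_max_right _ _
    have h1 := hFlt _ (hmem T hT0)
    rw [hdecomp] at h1
    have h2 : (M - F (pmin, 0)) / r * r = M - F (pmin, 0) := div_mul_cancel₀ _ hpos.ne'
    nlinarith [mul_le_mul_of_nonneg_right hT1 hpos.le]
  rcases eq_or_lt_of_le hrle with hr0 | hrneg
  · -- r = 0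
    have hFp : M < F (p, 0) := by
      have h := hFx
      rw [hdecomp p t0] at h
      have ht : t0 * r = 0 := by rw [hr0, mul_zero]
      linarith
    set k : ℝ := t0 / (F (p, 0) - M) with hk
    have hknn : 0 ≤ k := div_nonneg ht0 (by linarith)
    refine ⟨fun s => k * ψ s + (-(k * M)), ?_, ?_⟩
    · intro q hq
      rw [hsum2 _ _ q hq]
      refine real_le_ennreal ?_
      intro hne
      have hmemq : ((q, (c q).toReal) : (S → ℝ) × ℝ) ∈ epi :=
        ⟨hq, ENNReal.toReal_nonneg, by rw [ENNReal.ofReal_toReal hne]⟩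
      have h1 := hFlt _ hmemq
      rw [hdecomp q ((c q).toReal)] at h1
      have ht : (c q).toReal * r = 0 := by rw [hr0, mul_zero]
      have h2 : F (q, 0) < M := by linarith
      nlinarith [ENNReal.toReal_nonneg (a := c q)]
    · rw [hsum2 _ _ p hp]
      have : k * (F (p, 0) - M) = t0 := div_mul_cancel₀ _ (by linarith : F (p, 0) - M ≠ 0)
      linarith [this]
  · -- r < 0
    refine ⟨fun s => (1 / (-r)) * ψ s + (-((1 / (-r)) * M)), ?_, ?_⟩
    · intro q hq
      rw [hsum2 _ _ q hq]
      refine real_le_ennreal ?_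
      intro hne
      have hmemq : ((q, (c q).toReal) : (S → ℝ) × ℝ) ∈ epi :=
        ⟨hq, ENNReal.toReal_nonneg, by rw [ENNReal.ofReal_toReal hne]⟩
      have h1 := hFlt _ hmemq
      rw [hdecomp q ((c q).toReal)] at h1
      have hrpos : 0 < -r := by linarith
      have hkey : (F (q, 0) - M) / (-r) ≤ (c q).toReal := by
        rw [div_le_iff₀ hrpos]; nlinarith
      have hrne : r ≠ 0 := hrneg.ne
      have heq : 1 / -r * F (q, 0) + -(1 / -r * M) = (F (q, 0) - M) / (-r) := by
        field_simp; ring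
      rw [heq]
      exact hkey
    · rw [hsum2 _ _ p hp]
      have h := hFx
      rw [hdecomp p t0] at h
      have hrpos : 0 < -r := by linarith
      have hkey : t0 ≤ (F (p, 0) - M) / (-r) := by
        rw [le_div_iff₀ hrpos]; nlinarith
      have hrne : r ≠ 0 := hrneg.ne
      have heq : 1 / -r * F (p, 0) + -(1 / -r * M) = (F (p, 0) - M) / (-r) := by
        field_simp; ring
      rw [heq]
      exact hkey

theorem stmt4 {S : Type*} [Fintype S] {d n : ℕ} (hn : 2 ≤ n)
    (u : Fin n → EuclideanSpace ℝ (Fin d) → ℝ) (c : Fin n → (S → ℝ) → ℝ≥0∞)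
    (u0 : EuclideanSpace ℝ (Fin d) → ℝ) (c0 : (S → ℝ) → ℝ≥0∞)
    (hu : ∀ i, IsAffineFn (u i)) (hub : ∀ i, UnboundedFn (u i))
    (hc : ∀ i, MinZero (c i)) (hconv : ∀ i, ConvexPerc (c i))
    (hlsc : ∀ i, LowerSemicontinuous (c i))
    (hu0 : IsAffineFn u0) (hub0 : UnboundedFn u0) (hc0 : MinZero c0)
    (hconv0 : ConvexPerc c0) (hlsc0 : LowerSemicontinuous c0)
    (hdiv : ∀ i, ∃ xb xu : EuclideanSpace ℝ (Fin d),
      u i xu < u i xb ∧ ∀ j, j ≠ i → u j xb = u j xu)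
    (hpar : ∀ f g : S → EuclideanSpace ℝ (Fin d),
      (∀ i, VBPref (u i) (c i) f g) → VBPref u0 c0 f g) :
    ∃ (α : Fin n → ℝ) (β : ℝ), (∀ i, 0 ≤ α i) ∧
      (∀ x, u0 x = ∑ i, α i * u i x + β) ∧
      ∀ p : S → ℝ, IsProb p → ∀ i, ENNReal.ofReal (α i) * c i p ≤ c0 p := by
  classical
  choose L hL using fun i => affine_exists_linear (hu i)
  obtain ⟨L0, hL0⟩ := affine_exists_linear hu0
  obtain ⟨p0, hp0, hc0p0⟩ := hc0
  -- Pareto on constant acts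
  have P : ∀ x y : EuclideanSpace ℝ (Fin d), (∀ i, u i y ≤ u i x) → u0 y ≤ u0 x := by
    intro x y h
    have hVB : ∀ i, VBPref (u i) (c i) (fun _ => x) (fun _ => y) := by
      intro i q hq
      have hsum : ∀ v : ℝ, ∑ s, q s * v = v := by
        intro v; rw [← Finset.sum_mul, hq.2, one_mul]
      have e1 : (∑ s, q s * u i ((fun _ : S => y) s)) = u i y := hsum _
      have e2 : (∑ s, q s * u i ((fun _ : S => x) s)) = u i x := hsum _
      rw [e1, e2]
      exact le_trans (EReal.coe_le_coe_iff.2 (h i)) (ereal_self_le_add _)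
    have hP := hpar _ _ hVB p0 hp0
    have hsum : ∀ v : ℝ, ∑ s, p0 s * v = v := by
      intro v; rw [← Finset.sum_mul, hp0.2, one_mul]
    have e1 : (∑ s, p0 s * u0 ((fun _ : S => y) s)) = u0 y := hsum _
    have e2 : (∑ s, p0 s * u0 ((fun _ : S => x) s)) = u0 x := hsum _
    rw [e1, e2, hc0p0] at hP
    simpa using EReal.coe_le_coe_iff.1 (by simpa using hP)
  have P' : ∀ v, (∀ i, 0 ≤ L i v) → 0 ≤ L0 v := by
    intro v h
    have h2 : ∀ i, u i 0 ≤ u i v := by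
      intro i
      rw [hL i v]
      linarith [h i]
    have := P v 0 h2
    rw [hL0 v] at this
    linarith
  -- diversity directions
  choose xb xu hblt hbeq using hdiv
  set z : Fin n → EuclideanSpace ℝ (Fin d) := fun i => xb i - xu i with hzdef
  have hLval : ∀ (j : Fin n) x, L j x = u j x - u j 0 := by
    intro j x; rw [hL j x]; ring
  have hL0val : ∀ x, L0 x = u0 x - u0 0 := by
    intro x; rw [hL0 x]; ring
  have hLz : ∀ j i, L j (z i) = u j (xb i) - u j (xu i) := by
    intro j i
    rw [hzdef]
    simp only [map_sub]
    rw [hLval j (xb i), hLval j (xu i)]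
    ring
  have hzi : ∀ i, 0 < L i (z i) := by
    intro i; rw [hLz]; linarith [hblt i]
  have hzj : ∀ i j, j ≠ i → L j (z i) = 0 := by
    intro i j hj; rw [hLz, hbeq i j hj]; ring
  have hznn : ∀ i j, 0 ≤ L j (z i) := by
    intro i j
    rcases eq_or_ne j i with rfl | hne
    · exact (hzi j).le
    · rw [hzj i j hne]
  set α : Fin n → ℝ := fun i => L0 (z i) / L i (z i) with hαdef
  have hαnn : ∀ i, 0 ≤ α i := fun i => div_nonneg (P' _ (hznn i)) (hzi i).le
  have hL0rep : ∀ x, L0 x = ∑ i, α i * L i x := by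
    intro x
    set x' := x - ∑ j, (L j x / L j (z j)) • z j with hx'def
    have hk : ∀ k, L k x' = 0 := by
      intro k
      rw [hx'def, map_sub, map_sum]
      simp only [map_smul, smul_eq_mul]
      rw [Finset.sum_eq_single k]
      · rw [div_mul_cancel₀ _ (hzi k).ne']
        ring
      · intro b _ hb
        rw [hzj b k (Ne.symm hb), mul_zero]
      · intro h; exact absurd (Finset.mem_univ k) h
    have h0 : L0 x' = 0 := by
      have h1 : 0 ≤ L0 x' := P' x' (fun i => (hk i).ge)
      have h2 : 0 ≤ L0 (-x') := P' (-x') (fun i => by rw [map_neg, hk]; simp)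
      rw [map_neg] at h2
      linarith
    have hx : L0 x = L0 x' + ∑ j, (L j x / L j (z j)) * L0 (z j) := by
      rw [hx'def, map_sub, map_sum]
      simp only [map_smul, smul_eq_mul]
      ring
    rw [hx, h0, zero_add]
    apply Finset.sum_congr rfl
    intro j _
    rw [hαdef]
    ring
  set β : ℝ := u0 0 - ∑ i, α i * u i 0 with hβdef
  have hrep : ∀ x, u0 x = ∑ i, α i * u i x + β := by
    intro x
    have h1 : u0 x = ∑ i, α i * L i x + u0 0 := by rw [← hL0rep, hL0 x]
    have h2 : ∀ i, α i * L i x = α i * u i x - α i * u i 0 := by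
      intro i; rw [hLval i x]; ring
    rw [h1, hβdef]
    rw [Finset.sum_congr rfl (fun i _ => h2 i), Finset.sum_sub_distrib]
    ring
  refine ⟨α, β, hαnn, hrep, ?_⟩
  intro p hp i
  -- transfer lemma
  have B : ∀ φ : S → ℝ,
      (∀ q : S → ℝ, IsProb q → ((∑ s, q s * φ s : ℝ) : EReal) ≤ (c i q : EReal)) →
      ((α i * ∑ s, p s * φ s : ℝ) : EReal) ≤ (c0 p : EReal) := by
    intro φ hφ
    set f : S → EuclideanSpace ℝ (Fin d) := fun _ => xu i with hfdef
    set g : S → EuclideanSpace ℝ (Fin d) :=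
      fun s => xu i + (φ s / L i (z i)) • z i with hgdef
    have hug : ∀ (j : Fin n) s, u j (g s) = u j (xu i) + (φ s / L i (z i)) * L j (z i) := by
      intro j s
      have h1 := hL j (g s)
      have h2 := hL j (xu i)
      rw [hgdef] at h1
      simp only [map_add, map_smul, smul_eq_mul] at h1
      rw [h1, h2]
      ring
    have hVB : ∀ j, VBPref (u j) (c j) f g := by
      intro j q hq
      have hsumc : ∀ v : ℝ, ∑ s, q s * v = v := by
        intro v; rw [← Finset.sum_mul, hq.2, one_mul]
      rcases eq_or_ne j i with rfl | hji
      · have e : ∀ s, u j (g s) = u j (xu j) + φ s := by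
          intro s; rw [hug j s, div_mul_cancel₀ _ (hzi j).ne']
        have e1 : (∑ s, q s * u j (g s)) = u j (xu j) + ∑ s, q s * φ s := by
          calc ∑ s, q s * u j (g s) = ∑ s, (q s * u j (xu j) + q s * φ s) :=
                Finset.sum_congr rfl (fun s _ => by rw [e s]; ring)
            _ = (∑ s, q s * u j (xu j)) + ∑ s, q s * φ s := Finset.sum_add_distrib
            _ = u j (xu j) + ∑ s, q s * φ s := by rw [hsumc]
        have e2 : (∑ s, q s * u j (f s)) = u j (xu j) := by
          simp only [hfdef]; exact hsumc _
        rw [e1, e2]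
        exact ereal_uncancel (hφ q hq)
      · have e : ∀ s, u j (g s) = u j (f s) := by
          intro s
          rw [hug j s, hzj i j hji]
          simp [hfdef]
        have e1 : (∑ s, q s * u j (g s)) = ∑ s, q s * u j (f s) :=
          Finset.sum_congr rfl (fun s _ => by rw [e s])
        rw [e1]
        exact ereal_self_le_add _
    have hP := hpar f g hVB p hp
    have e0 : ∀ s, u0 (g s) = u0 (f s) + α i * φ s := by
      intro s
      have hsplit : ∀ j : Fin n,
          α j * u j (g s) = α j * u j (f s) + (if j = i then α i * φ s else 0) := by
        intro j
        rcases eq_or_ne j i with rfl | hji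
        · rw [if_pos rfl, hug j s, div_mul_cancel₀ _ (hzi j).ne']
          have : u j (f s) = u j (xu j) := by simp [hfdef]
          rw [this]; ring
        · rw [if_neg hji, hug j s, hzj i j hji]
          have : u j (f s) = u j (xu i) := by simp [hfdef]
          rw [this]; ring
      have hsum : ∑ j, α j * u j (g s) = (∑ j, α j * u j (f s)) + α i * φ s := by
        rw [Finset.sum_congr rfl (fun j _ => hsplit j), Finset.sum_add_distrib]
        congr 1
        rw [Finset.sum_ite_eq' Finset.univ i (fun _ => α i * φ s), if_pos (Finset.mem_univ i)]
      rw [hrep (g s), hrep (f s), hsum]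
      ring
    have e1 : ∑ s, p s * u0 (g s) = (∑ s, p s * u0 (f s)) + α i * ∑ s, p s * φ s := by
      calc ∑ s, p s * u0 (g s) = ∑ s, (p s * u0 (f s) + α i * (p s * φ s)) :=
            Finset.sum_congr rfl (fun s _ => by rw [e0 s]; ring)
        _ = (∑ s, p s * u0 (f s)) + ∑ s, α i * (p s * φ s) := Finset.sum_add_distrib
        _ = (∑ s, p s * u0 (f s)) + α i * ∑ s, p s * φ s := by rw [← Finset.mul_sum]
    rw [e1] at hP
    exact ereal_cancel hP
  -- conclusion via approximation
  apply ENNReal.le_of_forall_nnreal_lt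
  intro r hr
  rcases eq_or_lt_of_le (hαnn i) with hα0 | hαpos
  · exfalso
    rw [← hα0] at hr
    simp at hr
  · set t0 : ℝ := (r : ℝ) / α i with ht0def
    have ht0 : 0 ≤ t0 := div_nonneg r.coe_nonneg hαpos.le
    have h1 : ENNReal.ofReal t0 < c i p := by
      rw [ht0def, ENNReal.ofReal_div_of_pos hαpos, ENNReal.ofReal_coe_nnreal]
      rw [ENNReal.div_lt_iff (Or.inl (ENNReal.ofReal_pos.2 hαpos).ne')
        (Or.inl ENNReal.ofReal_ne_top)]
      rw [mul_comm]
      exact hr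
    obtain ⟨φ, hφ1, hφ2⟩ := exists_subgradient (c i) (hconv i) (hlsc i) (hc i) p hp t0 ht0 h1
    have hB := B φ hφ1
    have h2 : (r : ℝ) ≤ α i * ∑ s, p s * φ s := by
      have h3 : α i * t0 = r := by rw [ht0def]; field_simp
      nlinarith [mul_le_mul_of_nonneg_left hφ2 hαpos.le]
    have h4 : (((r : ℝ≥0∞)) : EReal) ≤ (c0 p : EReal) := by
      rw [EReal.coe_nnreal_eq_coe_real]
      exact le_trans (EReal.coe_le_coe_iff.2 h2) hB
    exact EReal.coe_ennreal_le_coe_ennreal_iff.1 h4
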